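/- Let $h \in C^1(\overline\Omega)$ with $h_p > 0$ on $\overline\Omega$, where $\Omega = \mathbb{S}\times(p_0,0)$, let $g, \sigma > 0$, $Q \in \mathbb{R}$, and suppose $h$ satisfies on $p = 0$ the nonlocal equation $h + (1-\partial_q^2)^{-1}\mathrm{tr}_0\big(\frac{(1+h_q^2+(2gh-Q)h_p^2)(1+h_q^2)^{3/2}}{2\sigma h_p^2} - h\big) = 0$, where $\mathrm{tr}_0 h \in C^\alpha(\mathbb{S})$ and the argument of $(1-\partial_q^2)^{-1}$ is in $C^\alpha(\mathbb{S})$. Then $\mathrm{tr}_0 h \in C^{2+\alpha}(\mathbb{S})$ and $h$ satisfies pointwise on $p = 0$ the Bernoulli boundary condition $1 + h_q^2 + (2gh - Q)h_p^2 - 2\sigma \frac{h_p^2 h_{qq}}{(1+h_q^2)^{3/2}} = 0$. -/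

import Mathlib

/- STATEMENT 18 (Lemma L:1, (ii)⇒(i)): if `h ∈ C¹(Ω̄)`, `h_p > 0`, satisfies on
`p = 0` the nonlocal equation
`h + (1-∂_q²)⁻¹ tr₀( ((1+h_q²+(2gh-Q)h_p²)(1+h_q²)^{3/2})/(2σh_p²) - h ) = 0`,
then `tr₀ h ∈ C^{2+α}(𝕊)` and `h` satisfies pointwise on `p = 0` the Bernoulli
condition `1 + h_q² + (2gh-Q)h_p² - 2σ h_p² h_qq/(1+h_q²)^{3/2} = 0`.
The value `(1-∂_q²)⁻¹ tr₀(⋯)` is encoded by a `2π`-periodic `C²` function `ψ`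
with `α`-Hölder second derivative satisfying `ψ - ψ'' = tr₀(⋯)`. -/
theorem nonlocal_implies_bernoulli
    (p0 α g σ Q : ℝ) (hp0 : p0 < 0) (hα : α ∈ Set.Ioo (0:ℝ) 1)
    (hg : 0 < g) (hσ : 0 < σ)
    (h hq hp : ℝ × ℝ → ℝ)
    (strip : Set (ℝ × ℝ)) (hstrip : strip = {x : ℝ × ℝ | x.2 ∈ Set.Icc p0 0})
    (hcont : ContinuousOn h strip) (hqcont : ContinuousOn hq strip)
    (hpcont : ContinuousOn hp strip)
    (hdq : ∀ x ∈ strip, HasDerivAt (fun t => h (t, x.2)) (hq x) x.1)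
    (hdp : ∀ x ∈ strip, HasDerivWithinAt (fun t => h (x.1, t)) (hp x) (Set.Icc p0 0) x.2)
    (hppos : ∀ x ∈ strip, 0 < hp x)
    (φ : ℝ → ℝ)
    (hφ : ∀ q : ℝ, φ q =
      (1 + hq (q, 0) ^ 2 + (2 * g * h (q, 0) - Q) * hp (q, 0) ^ 2) *
        (1 + hq (q, 0) ^ 2) ^ ((3:ℝ)/2) / (2 * σ * hp (q, 0) ^ 2) - h (q, 0))
    (hφhold : ∃ C : ℝ, ∀ x y : ℝ, |φ x - φ y| ≤ C * |x - y| ^ α)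
    (ψ ψ' ψ'' : ℝ → ℝ)
    (hψper : Function.Periodic ψ (2 * Real.pi))
    (hψ1 : ∀ q, HasDerivAt ψ (ψ' q) q)
    (hψ2 : ∀ q, HasDerivAt ψ' (ψ'' q) q)
    (hψ''hold : ∃ C : ℝ, ∀ x y : ℝ, |ψ'' x - ψ'' y| ≤ C * |x - y| ^ α)
    (hinv : ∀ q, ψ q - ψ'' q = φ q)
    -- the nonlocal boundary equation on `p = 0` :
    (hnonlocal : ∀ q : ℝ, h (q, 0) + ψ q = 0) :
    ∃ tr'' : ℝ → ℝ,
      (∀ q, HasDerivAt (fun t => hq (t, 0)) (tr'' q) q) ∧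
      (∃ C : ℝ, ∀ x y : ℝ, |tr'' x - tr'' y| ≤ C * |x - y| ^ α) ∧
      ∀ q : ℝ,
        1 + hq (q, 0) ^ 2 + (2 * g * h (q, 0) - Q) * hp (q, 0) ^ 2 -
          2 * σ * (hp (q, 0) ^ 2 * tr'' q) / (1 + hq (q, 0) ^ 2) ^ ((3:ℝ)/2) = 0 := by
  have hmem : ∀ q : ℝ, ((q, 0) : ℝ × ℝ) ∈ strip := by
    intro q; rw [hstrip]; exact ⟨le_of_lt hp0, le_refl 0⟩
  -- h(q,0) = -ψ q
  have hval : ∀ q, h (q, 0) = -ψ q := fun q => by linarith [hnonlocal q]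
  have hq1 : ∀ q, hq (q, 0) = -ψ' q := by
    intro q
    have h1 : HasDerivAt (fun t => h (t, 0)) (hq (q, 0)) q := hdq (q, 0) (hmem q)
    have h2 : HasDerivAt (fun t => h (t, 0)) (-ψ' q) q := by
      have : HasDerivAt (fun t => -ψ t) (-ψ' q) q := (hψ1 q).neg
      simpa [hval] using this
    exact h1.unique h2
  refine ⟨fun q => -ψ'' q, ?_, ?_, ?_⟩
  · intro q
    have h2 : HasDerivAt (fun t => -ψ' t) (-ψ'' q) q := (hψ2 q).neg
    have : (fun t => hq (t, 0)) = fun t => -ψ' t := funext fun t => hq1 t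
    rw [this]; exact h2
  · obtain ⟨C, hC⟩ := hψ''hold
    refine ⟨C, fun x y => ?_⟩
    have := hC x y
    rw [show -ψ'' x - -ψ'' y = -(ψ'' x - ψ'' y) by ring, abs_neg]
    exact this
  · intro q
    have hppos' : 0 < hp (q, 0) := hppos (q, 0) (hmem q)
    have hbase : (0:ℝ) < 1 + hq (q, 0) ^ 2 := by positivity
    have hpow : (0:ℝ) < (1 + hq (q, 0) ^ 2) ^ ((3:ℝ)/2) := Real.rpow_pos_of_pos hbase _
    have key : (1 + hq (q, 0) ^ 2 + (2 * g * h (q, 0) - Q) * hp (q, 0) ^ 2) *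
        (1 + hq (q, 0) ^ 2) ^ ((3:ℝ)/2) / (2 * σ * hp (q, 0) ^ 2) = -ψ'' q := by
      have := hinv q
      rw [hφ q] at this
      have := hnonlocal q
      linarith [hinv q, hφ q ▸ (hinv q)]
    have h2σ : (2 * σ * hp (q, 0) ^ 2) ≠ 0 := by positivity
    have key2 : (1 + hq (q, 0) ^ 2 + (2 * g * h (q, 0) - Q) * hp (q, 0) ^ 2) *
        (1 + hq (q, 0) ^ 2) ^ ((3:ℝ)/2) = -ψ'' q * (2 * σ * hp (q, 0) ^ 2) := by
      field_simp at key
      linarith [key]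
    simp only
    rw [show 2 * σ * (hp (q, 0) ^ 2 * -ψ'' q) = -ψ'' q * (2 * σ * hp (q, 0) ^ 2) from by ring,
      ← key2, mul_div_assoc, div_self (ne_of_gt hpow), mul_one]
    ring
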